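/- Let B be a 𝔤-crystal each of whose connected components is isomorphic to a highest weight crystal B(λ) for some λ ∈ P⁺. If X and Y are extremal subsets of B, then X ∪ Y is extremal, and if in addition X ∩ Y ≠ ∅, then X ∩ Y is extremal. -/

import Mathlib

/-!
Abstract framework for crystals of symmetrizable Kac–Moody algebras,
Demazure crystals, extremal/ideal/principal subsets and Demazure atoms,
following "Demazure crystals and their unions".

The Dynkin index set is `I`, the weight lattice is an additive group `P`
with simple roots `α i` and coroot pairings `coroot i = ⟨α_i^∨, ·⟩`.
The Weyl group is presented by a Coxeter system `cs : CoxeterSystem M W`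
acting on `P` so that `cs.simple i • μ = μ - ⟨α_i^∨, μ⟩ • α i`.
-/

namespace DemazurePaper

open scoped Classical

/-- The data of a `𝔤`-crystal: a set `B` with weight map `wt`, string lengths
`eps i = ε_i`, `phi i = φ_i`, and raising/lowering operators `e i`, `f i`
(valued in `Option B`, where `none` plays the role of `0`), subject to the
usual crystal axioms.  Here `ε_i(b) = max {k | e_i^k(b) ≠ 0}` and
`φ_i(b) = max {k | f_i^k(b) ≠ 0}` are encoded by `eps_spec` and `phi_spec`. -/
structure Crystal (I : Type*) (P : Type*) [AddCommGroup P]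
    (α : I → P) (coroot : I → P →+ ℤ) where
  /-- the underlying set of the crystal -/
  B : Type*
  wt : B → P
  eps : I → B → ℤ
  phi : I → B → ℤ
  e : I → B → Option B
  f : I → B → Option B
  phi_eq : ∀ (i : I) (b : B), phi i b = coroot i (wt b) + eps i b
  e_iff_f : ∀ (i : I) (b b' : B), e i b = some b' ↔ f i b' = some b
  wt_e : ∀ (i : I) (b b' : B), e i b = some b' → wt b' = wt b + α i
  eps_e : ∀ (i : I) (b b' : B), e i b = some b' → eps i b = eps i b' + 1
  phi_e : ∀ (i : I) (b b' : B), e i b = some b' → phi i b' = phi i b + 1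
  eps_spec : ∀ (i : I) (b : B) (k : ℕ),
    ((fun ob => Option.bind ob (e i))^[k] (some b)).isSome ↔ (k : ℤ) ≤ eps i b
  phi_spec : ∀ (i : I) (b : B) (k : ℕ),
    ((fun ob => Option.bind ob (f i))^[k] (some b)).isSome ↔ (k : ℤ) ≤ phi i b

namespace Crystal

variable {I : Type*} {P : Type*} [AddCommGroup P]
  {α : I → P} {coroot : I → P →+ ℤ}

variable (C : Crystal I P α coroot)

/-- `e_i^k`, the `k`-th iterate of the raising operator `e_i`. -/
def eIter (i : I) (k : ℕ) (b : C.B) : Option C.B :=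
  (fun ob => Option.bind ob (C.e i))^[k] (some b)

/-- `f_i^k`, the `k`-th iterate of the lowering operator `f_i`. -/
def fIter (i : I) (k : ℕ) (b : C.B) : Option C.B :=
  (fun ob => Option.bind ob (C.f i))^[k] (some b)

/-- `e_i^*(b) = e_i^{ε_i(b)}(b)`, the head of the `i`-string through `b`. -/
noncomputable def estar (i : I) (b : C.B) : C.B :=
  (C.eIter i (C.eps i b).toNat b).getD b

/-- `f_i^*(b) = f_i^{φ_i(b)}(b)`, the tail of the `i`-string through `b`. -/
noncomputable def fstar (i : I) (b : C.B) : C.B :=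
  (C.fIter i (C.phi i b).toNat b).getD b

/-- `estars [i₁, …, i_k] b = e_{i₁}^* (e_{i₂}^* (⋯ (e_{i_k}^* b)))`. -/
noncomputable def estars (l : List I) (b : C.B) : C.B := l.foldr C.estar b

/-- `fstars [i₁, …, i_k] b = f_{i₁}^* (f_{i₂}^* (⋯ (f_{i_k}^* b)))`. -/
noncomputable def fstars (l : List I) (b : C.B) : C.B := l.foldr C.fstar b

/-- The `i`-string through `b`: all nonzero `e_i^m(b)` and `f_i^n(b)`. -/
def string (i : I) (b : C.B) : Set C.B :=
  {b' | ∃ k : ℕ, C.eIter i k b = some b' ∨ C.fIter i k b = some b'}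

/-- A subset `X` of the crystal is *extremal* if it is nonempty and for every
`i`-string `S`, the intersection `S ∩ X` is either empty, or all of `S`, or
the singleton of the head of the string. -/
def IsExtremal (X : Set C.B) : Prop :=
  X.Nonempty ∧ ∀ (i : I) (b : C.B),
    C.string i b ∩ X = ∅ ∨ C.string i b ∩ X = C.string i b ∨
      ∃ h : C.B, C.e i h = none ∧ C.string i b ∩ X = {h}

/-- An extremal subset `X` is *ideal* (relative to the predicate `ext` of being
an extremal element) if whenever `x, y ∈ X` are extremal elements with
`x = e_j^* e_{i₁}^* ⋯ e_{i_m}^* (y)`, also `f_{i_m}^* ⋯ f_{i₁}^* (x) ∈ X`. -/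
def IsIdeal (ext : C.B → Prop) (X : Set C.B) : Prop :=
  C.IsExtremal X ∧ ∀ (x y : C.B) (j : I) (L : List I),
    x ∈ X → y ∈ X → ext x → ext y →
      x = C.estars (j :: L) y → C.fstars L.reverse x ∈ X

/-- `Fapply [i₁, …, i_ℓ] X = ⋃_{m₁, …, m_ℓ ≥ 0} f_{i₁}^{m₁} ⋯ f_{i_ℓ}^{m_ℓ} (X)`,
the result of applying the monoid of lowering operators along a word to `X`. -/
def Fapply : List I → Set C.B → Set C.B
  | [], X => X
  | i :: l, X => {b | ∃ (k : ℕ) (b' : C.B), b' ∈ Fapply l X ∧ C.fIter i k b' = some b}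

/-- `fPow [(i₁,k₁), …, (i_n,k_n)] b = f_{i_n}^{k_n} ⋯ f_{i₁}^{k₁} (b)`
(the operator `f_{i₁}^{k₁}` is applied first). -/
def fPow : List (I × ℕ) → C.B → Option C.B
  | [], b => some b
  | p :: l, b => (C.fIter p.1 p.2 b).bind (fPow l)


/-- Every connected component of the crystal is a highest weight crystal
`B(λ)` for some dominant `λ`: every element lies below a unique highest
weight vector, whose weight is dominant. -/
def IsHWDecomposable (C : Crystal I P α coroot) : Prop :=
  ∀ b : C.B, ∃! h : C.B, (∀ i : I, C.e i h = none) ∧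
    (∀ i : I, 0 ≤ coroot i (C.wt h)) ∧
    ∃ l : List I, b ∈ C.Fapply l ({h} : Set C.B)

end Crystal

/-- A highest weight crystal `B(λ)`: a connected crystal with a unique highest
weight vector `hw = b_λ` of weight `lam = λ`, every element being reachable
from `b_λ` by lowering operators. -/
structure HighestWeightCrystal (I : Type*) (P : Type*) [AddCommGroup P]
    (α : I → P) (coroot : I → P →+ ℤ) (lam : P)
    extends Crystal I P α coroot where
  hw : B
  wt_hw : wt hw = lam
  e_hw : ∀ i : I, e i hw = none
  hw_unique : ∀ b : B, (∀ i : I, e i b = none) → b = hw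
  connected : ∀ b : B, ∃ l : List I, b ∈ toCrystal.Fapply l {hw}


section ExtremalElt

variable {I : Type*} {P : Type*} [AddCommGroup P]
  {α : I → P} {coroot : I → P →+ ℤ} {lam : P}

/-- An element of `B(λ)` is *extremal* if its weight lies in the Weyl orbit `Wλ`. -/
def IsExtremalElt (W : Type*) [Monoid W] [MulAction W P]
    (C : HighestWeightCrystal I P α coroot lam) (b : C.B) : Prop :=
  C.wt b ∈ MulAction.orbit W lam

/-- An element `b` of a crystal all of whose components are highest weight
crystals is *extremal* if `wt b` lies in the Weyl orbit of the weight of the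
highest weight vector of the component of `b`. -/
def IsExtremalEltGen (W : Type*) [Monoid W] [MulAction W P]
    (C : Crystal I P α coroot) (b : C.B) : Prop :=
  ∃ h : C.B, (∀ i : I, C.e i h = none) ∧
    (∃ l : List I, b ∈ C.Fapply l ({h} : Set C.B)) ∧
    C.wt b ∈ MulAction.orbit W (C.wt h)


end ExtremalElt

section Weyl

variable {I : Type*} {W : Type*} [Group W] {M : CoxeterMatrix I}

/-- `l` is a reduced expression (rex) for `w`. -/
def IsRex (cs : CoxeterSystem M W) (l : List I) (w : W) : Prop :=
  cs.IsReduced l ∧ cs.wordProd l = w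

/-- The strong Bruhat order on `W`, via the subword property:
`u ⪯ w` iff every reduced expression for `w` contains a reduced expression
for `u` as a subword. -/
def BruhatLE (cs : CoxeterSystem M W) (u w : W) : Prop :=
  ∀ l : List I, IsRex cs l w → ∃ l' : List I, l'.Sublist l ∧ IsRex cs l' u

/-- The strict strong Bruhat order. -/
def BruhatLT (cs : CoxeterSystem M W) (u w : W) : Prop :=
  BruhatLE cs u w ∧ u ≠ w

/-- A lower order ideal of `W` under strong Bruhat order. -/
def IsLowerIdeal (cs : CoxeterSystem M W) (S : Set W) : Prop :=
  ∀ u w : W, BruhatLE cs u w → w ∈ S → u ∈ S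

variable {P : Type*} [AddCommGroup P]

/-- `flr` is a "minimal length coset representative" function: for `w : W` and
`μ : P`, the element `flr w μ = ⌊w⌋^μ` is the unique minimal length element of
the coset `w ⋅ Stab_W(μ)` = `{v : W | v • μ = w • μ}`. -/
def IsFloor [MulAction W P] (cs : CoxeterSystem M W) (flr : W → P → W) : Prop :=
  ∀ (w : W) (μ : P),
    flr w μ • μ = w • μ ∧
    (∀ v : W, v • μ = w • μ → cs.length (flr w μ) ≤ cs.length v) ∧
    (∀ v : W, v • μ = w • μ → (∀ v' : W, v' • μ = w • μ →
      cs.length v ≤ cs.length v') → v = flr w μ)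

variable {α : I → P} {coroot : I → P →+ ℤ} {lam : P}

/-- `Dem : W → Set C.B` is the family of Demazure crystals of `B(λ)`:
`Dem w = B_w(λ) = F_w {b_λ}`, computed from any reduced expression of `w`
(by Kashiwara's theorem this is independent of the reduced expression). -/
def IsDemazureFamily (cs : CoxeterSystem M W)
    (C : HighestWeightCrystal I P α coroot lam) (Dem : W → Set C.B) : Prop :=
  ∀ (w : W) (l : List I), IsRex cs l w →
    Dem w = C.toCrystal.Fapply l ({C.hw} : Set C.B)

/-- An extremal subset `X ⊆ B(λ)` is *principal* if there is an extremal element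
`x ∈ X`, of weight `wλ`, such that every extremal element `y ∈ X`, of weight
`uλ`, satisfies `⌊u⌋^λ ⪯ ⌊w⌋^λ` in Bruhat order. -/
def IsPrincipal [MulAction W P] (cs : CoxeterSystem M W) (flr : W → P → W)
    (C : HighestWeightCrystal I P α coroot lam) (X : Set C.B) : Prop :=
  C.toCrystal.IsExtremal X ∧
    ∃ x ∈ X, ∃ w : W, C.wt x = w • lam ∧
      ∀ y ∈ X, ∀ u : W, C.wt y = u • lam →
        BruhatLE cs (flr u lam) (flr w lam)

/-- The Demazure atom `A_w(λ) = B_w(λ) \ ⋃_{v ≺ ⌊w⌋^λ} B_v(λ)`. -/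
def Atom (cs : CoxeterSystem M W) (flr : W → P → W)
    (C : HighestWeightCrystal I P α coroot lam) (Dem : W → Set C.B)
    (w : W) : Set C.B :=
  Dem w \ ⋃ v ∈ {v : W | BruhatLT cs v (flr w lam)}, Dem v

end Weyl

/-- Dominance order on the weight lattice: `μ ≤ ν` iff `ν - μ` is a nonnegative
integer combination of the simple roots. -/
def DomLE {I : Type*} {P : Type*} [AddCommGroup P] (α : I → P) (μ ν : P) : Prop :=
  ∃ c : I →₀ ℕ, ν - μ = c.sum fun i n => (n : ℤ) • α i

section Aux

variable {I : Type*} {P : Type*} [AddCommGroup P]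
    {α : I → P} {coroot : I → P →+ ℤ} (C : Crystal I P α coroot)

lemma eIter_succ (i : I) (k : ℕ) (b : C.B) :
    C.eIter i (k + 1) b = (C.eIter i k b).bind (C.e i) := by
  simp [Crystal.eIter, Function.iterate_succ_apply']

lemma fIter_succ (i : I) (k : ℕ) (b : C.B) :
    C.fIter i (k + 1) b = (C.fIter i k b).bind (C.f i) := by
  simp [Crystal.fIter, Function.iterate_succ_apply']

lemma head_spec {i : I} {b b1 : C.B} (h : b1 ∈ C.string i b)
    (he : C.e i b1 = none) :
    ∃ k : ℕ, C.eIter i k b = some b1 ∧ (k : ℤ) = C.eps i b := by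
  obtain ⟨k, hk | hk⟩ := h
  · refine ⟨k, hk, ?_⟩
    have h1 : ((k : ℤ)) ≤ C.eps i b := by
      have := (C.eps_spec i b k).mp
      rw [show (fun ob => Option.bind ob (C.e i))^[k] (some b) = C.eIter i k b from rfl,
        hk] at this
      exact this rfl
    have h2 : ¬ ((k : ℤ) + 1 ≤ C.eps i b) := by
      intro hle
      have := (C.eps_spec i b (k + 1)).mpr (by push_cast; exact hle)
      rw [show (fun ob => Option.bind ob (C.e i))^[k+1] (some b) = C.eIter i (k+1) b from rfl,
        eIter_succ, hk] at this
      simp [he] at this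
    omega
  · cases k with
    | zero =>
      refine ⟨0, ?_, ?_⟩
      · simpa [Crystal.fIter, Crystal.eIter] using hk
      · have hb : b = b1 := by simpa [Crystal.fIter] using hk
        subst hb
        have h1 : ((0 : ℤ)) ≤ C.eps i b := by
          exact_mod_cast (C.eps_spec i b 0).mp (by simp)
        have h2 : ¬ ((0 : ℤ) + 1 ≤ C.eps i b) := by
          intro hle
          have := (C.eps_spec i b 1).mpr (by push_cast; exact hle)
          simp only [Function.iterate_one] at this
          simp [he] at this
        omega
    | succ m =>
      exfalso
      rw [fIter_succ] at hk
      obtain ⟨c, hc, hfc⟩ := Option.bind_eq_some_iff.mp hk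
      have : C.e i b1 = some c := (C.e_iff_f i b1 c).mpr hfc
      rw [he] at this
      exact Option.noConfusion rfl (heq_of_eq this)

lemma head_unique {i : I} {b b1 b2 : C.B} (h1 : b1 ∈ C.string i b)
    (h2 : b2 ∈ C.string i b) (he1 : C.e i b1 = none) (he2 : C.e i b2 = none) :
    b1 = b2 := by
  obtain ⟨k1, hk1, hk1'⟩ := head_spec C h1 he1
  obtain ⟨k2, hk2, hk2'⟩ := head_spec C h2 he2
  have : k1 = k2 := by omega
  subst this
  rw [hk1] at hk2
  exact Option.some_injective _ hk2

end Aux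

theorem union_and_inter_of_extremal_subsets
    {I : Type*} {P : Type*} [AddCommGroup P]
    {α : I → P} {coroot : I → P →+ ℤ}
    (C : Crystal I P α coroot) (hC : C.IsHWDecomposable)
    (X Y : Set C.B) (hX : C.IsExtremal X) (hY : C.IsExtremal Y) :
    C.IsExtremal (X ∪ Y) ∧ ((X ∩ Y).Nonempty → C.IsExtremal (X ∩ Y)) := by
  obtain ⟨hXne, hXs⟩ := hX
  obtain ⟨hYne, hYs⟩ := hY
  have key : ∀ (i : I) (b : C.B), ∀ Z W : Set C.B,
      (C.string i b ∩ Z = ∅ ∨ C.string i b ∩ Z = C.string i b ∨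
        ∃ h : C.B, C.e i h = none ∧ C.string i b ∩ Z = {h}) →
      (C.string i b ∩ W = ∅ ∨ C.string i b ∩ W = C.string i b ∨
        ∃ h : C.B, C.e i h = none ∧ C.string i b ∩ W = {h}) →
      (C.string i b ∩ (Z ∪ W) = ∅ ∨ C.string i b ∩ (Z ∪ W) = C.string i b ∨
        ∃ h : C.B, C.e i h = none ∧ C.string i b ∩ (Z ∪ W) = {h}) ∧
      (C.string i b ∩ (Z ∩ W) = ∅ ∨ C.string i b ∩ (Z ∩ W) = C.string i b ∨
        ∃ h : C.B, C.e i h = none ∧ C.string i b ∩ (Z ∩ W) = {h}) := by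
    intro i b Z W hZ hW
    have hu : C.string i b ∩ (Z ∪ W) = (C.string i b ∩ Z) ∪ (C.string i b ∩ W) :=
      Set.inter_union_distrib_left _ _ _
    have hi : C.string i b ∩ (Z ∩ W) = (C.string i b ∩ Z) ∩ (C.string i b ∩ W) := by
      ext x; simp only [Set.mem_inter_iff]; tauto
    have subZ : C.string i b ∩ Z ⊆ C.string i b := Set.inter_subset_left
    have subW : C.string i b ∩ W ⊆ C.string i b := Set.inter_subset_left
    rcases hZ with hZ | hZ | ⟨h1, he1, hZ⟩ <;> rcases hW with hW | hW | ⟨h2, he2, hW⟩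
    · constructor
      · left; rw [hu, hZ, hW, Set.empty_union]
      · left; rw [hi, hZ, Set.empty_inter]
    · constructor
      · right; left; rw [hu, hZ, hW, Set.empty_union]
      · left; rw [hi, hZ, Set.empty_inter]
    · constructor
      · right; right
        exact ⟨h2, he2, by rw [hu, hZ, hW, Set.empty_union]⟩
      · left; rw [hi, hZ, Set.empty_inter]
    · constructor
      · right; left; rw [hu, hZ, hW, Set.union_empty]
      · left; rw [hi, hW, Set.inter_empty]
    · constructor
      · right; left; rw [hu, hZ, hW, Set.union_self]
      · right; left; rw [hi, hZ, hW, Set.inter_self]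
    · have hmem : h2 ∈ C.string i b := subW (by rw [hW]; rfl)
      constructor
      · right; left
        rw [hu, hZ, hW, Set.union_singleton, Set.insert_eq_of_mem hmem]
      · right; right
        refine ⟨h2, he2, ?_⟩
        rw [hi, hZ, hW, Set.inter_eq_right.mpr (Set.singleton_subset_iff.mpr hmem)]
    · constructor
      · right; right
        exact ⟨h1, he1, by rw [hu, hZ, hW, Set.union_empty]⟩
      · left; rw [hi, hW, Set.inter_empty]
    · have hmem : h1 ∈ C.string i b := subZ (by rw [hZ]; rfl)
      constructor
      · right; left
        rw [hu, hZ, hW, Set.singleton_union, Set.insert_eq_of_mem hmem]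
      · right; right
        refine ⟨h1, he1, ?_⟩
        rw [hi, hZ, hW, Set.inter_eq_left.mpr (Set.singleton_subset_iff.mpr hmem)]
    · have hmem1 : h1 ∈ C.string i b := subZ (by rw [hZ]; rfl)
      have hmem2 : h2 ∈ C.string i b := subW (by rw [hW]; rfl)
      have heq : h1 = h2 := head_unique C hmem1 hmem2 he1 he2
      subst heq
      constructor
      · right; right
        exact ⟨h1, he1, by rw [hu, hZ, hW, Set.union_self]⟩
      · right; right
        exact ⟨h1, he1, by rw [hi, hZ, hW, Set.inter_self]⟩
  constructor
  · exact ⟨hXne.mono Set.subset_union_left,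
      fun i b => (key i b X Y (hXs i b) (hYs i b)).1⟩
  · intro hne
    exact ⟨hne, fun i b => (key i b X Y (hXs i b) (hYs i b)).2⟩

end DemazurePaper
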